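/- If φ is a continuous semiflow on a metric space (X,d) satisfying: for every ε>0 there exists δ>0 such that for all x,y in X and all continuous, surjective, strictly increasing s:[0,∞)→[0,∞) with s(0)=0, if d(φ_t(x),φ_{s(t)}(y))<δ for all t≥0 then y=φ_{t₀}(x) for some t₀∈[0,ε), then φ_t is the identity map on X for every t≥0. -/

import Mathlib

open scoped NNReal
open Filter Topology

def IsSemiflow {X : Type*} [TopologicalSpace X] (φ : X → ℝ≥0 → X) : Prop :=
  Continuous (fun p : X × ℝ≥0 => φ p.1 p.2) ∧
  (∀ x, φ x 0 = x) ∧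
  (∀ x t s, φ (φ x t) s = φ x (t + s))

def Hplus (s : ℝ≥0 → ℝ≥0) : Prop :=
  Continuous s ∧ StrictMono s ∧ Function.Surjective s ∧ s 0 = 0

/-- Expansiveness in the sense of Alves–Carvalho–Siqueira (with `H⁺`). -/
def Expansive {X : Type*} [MetricSpace X] (φ : X → ℝ≥0 → X) : Prop :=
  ∀ ε : ℝ, 0 < ε → ∃ δ : ℝ, 0 < δ ∧ ∀ x y : X, ∀ s : ℝ≥0 → ℝ≥0, Hplus s →
    (∀ t, dist (φ x t) (φ y (s t)) < δ) →
    ∃ t₀ : ℝ≥0, (t₀ : ℝ) < ε ∧ y = φ x t₀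

/-- Positive expansiveness (symmetric version). -/
def PosExpansive {X : Type*} [MetricSpace X] (φ : X → ℝ≥0 → X) : Prop :=
  ∀ ε : ℝ, 0 < ε → ∃ δ : ℝ, 0 < δ ∧ ∀ x y : X, ∀ s : ℝ≥0 → ℝ≥0, Hplus s →
    (∀ t, dist (φ x t) (φ y (s t)) < δ) →
    ∃ t₀ : ℝ≥0, (t₀ : ℝ) < ε ∧ (y = φ x t₀ ∨ x = φ y t₀)

def posOrbit {X : Type*} (φ : X → ℝ≥0 → X) (x : X) : Set X := Set.range (φ x)

def preOrbit {X : Type*} (φ : X → ℝ≥0 → X) (x : X) : Set X := {y | ∃ t, φ y t = x}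

noncomputable def tau {X : Type*} (φ : X → ℝ≥0 → X) (x y : X) : ℝ≥0 :=
  sInf {t : ℝ≥0 | φ y t = x}

def IsSingularity {X : Type*} (φ : X → ℝ≥0 → X) (x : X) : Prop :=
  posOrbit φ x = {x} ∧ preOrbit φ x = {x}

def IsEndPoint {X : Type*} (φ : X → ℝ≥0 → X) (x : X) : Prop :=
  posOrbit φ x = {x} ∧ preOrbit φ x ≠ {x}

def IsPeriodicPoint {X : Type*} (φ : X → ℝ≥0 → X) (x : X) : Prop :=
  (∃ t₀ : ℝ≥0, 0 < t₀ ∧ φ x t₀ = x) ∧ posOrbit φ x ≠ {x}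

def Xtail {X : Type*} (φ : X → ℝ≥0 → X) : Set X :=
  ⋃ x ∈ {x | IsEndPoint φ x}, preOrbit φ x

def Xsing {X : Type*} (φ : X → ℝ≥0 → X) : Set X := {x | IsSingularity φ x}

def limitSet {X : Type*} [TopologicalSpace X] (φ : X → ℝ≥0 → X) (y : X) : Set X :=
  {z | ∃ u : ℕ → ℝ≥0, Tendsto u atTop atTop ∧ Tendsto (fun n => φ y (u n)) atTop (𝓝 z)}

theorem stmt0 {X : Type*} [MetricSpace X] (φ : X → ℝ≥0 → X)
    (hφ : IsSemiflow φ) (hexp : Expansive φ) :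
    ∀ t : ℝ≥0, ∀ x : X, φ x t = x := by
  obtain ⟨hcont, h0, hadd⟩ := hφ
  have hcx : ∀ x : X, Continuous (fun u : ℝ≥0 => φ x u) := by
    intro x
    exact hcont.comp (Continuous.prodMk_right x)
  -- Step 1: every point has arbitrarily small positive periods
  have key : ∀ x : X, ∀ η : ℝ, 0 < η → ∃ p : ℝ≥0, 0 < p ∧ (p : ℝ) < η ∧ φ x p = x := by
    intro x η hη
    obtain ⟨δ, hδ, hδ'⟩ := hexp (η / 2) (by positivity)
    -- continuity at 0
    have h0' : ContinuousAt (fun u : ℝ≥0 => φ x u) 0 := (hcx x).continuousAt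
    rw [Metric.continuousAt_iff] at h0'
    obtain ⟨r, hr, hrd⟩ := h0' (δ / 2) (by positivity)
    set c' : ℝ := min (r / 3) (η / 4) with hc'
    have hc'pos : 0 < c' := lt_min (by positivity) (by positivity)
    set c : ℝ≥0 := c'.toNNReal with hc
    have hcr : (c : ℝ) = c' := Real.coe_toNNReal _ hc'pos.le
    have hcpos : 0 < c := by
      rw [← NNReal.coe_pos, hcr]; exact hc'pos
    have hsmall : ∀ u : ℝ≥0, u ≤ 2 * c → dist (φ x u) x < δ / 2 := by
      intro u hu
      have hdu : dist u (0 : ℝ≥0) < r := by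
        rw [NNReal.dist_eq]
        simp only [NNReal.coe_zero, sub_zero]
        rw [abs_of_nonneg u.coe_nonneg]
        calc (u : ℝ) ≤ ((2 * c : ℝ≥0) : ℝ) := by exact_mod_cast hu
          _ = 2 * c' := by push_cast [hcr]; ring
          _ ≤ 2 * (r / 3) := by
              have := min_le_left (r / 3) (η / 4)
              rw [hc'] at *; nlinarith
          _ < r := by linarith
      have := hrd hdu
      rwa [h0 x] at this
    -- the reparametrization
    set s : ℝ≥0 → ℝ≥0 := fun t => t + min t c with hs
    have hsH : Hplus s := by
      refine ⟨continuous_id.add (continuous_id.min continuous_const), ?_, ?_, by simp [hs]⟩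
      · intro a b hab
        exact add_lt_add_of_lt_of_le hab (min_le_min hab.le le_rfl)
      · intro u
        rcases le_total u (2 * c) with h | h
        · refine ⟨u / 2, ?_⟩
          have h2 : u / 2 ≤ c := by
            rw [div_le_iff₀ (by norm_num : (0:ℝ≥0) < 2)]
            rwa [mul_comm]
          simp only [hs, min_eq_left h2]
          rw [← two_mul, mul_div_cancel₀]
          norm_num
        · refine ⟨u - c, ?_⟩
          have hcu : c ≤ u - c := by
            have : c + c ≤ u := by rwa [← two_mul]
            exact le_tsub_of_add_le_left this
          simp only [hs, min_eq_right hcu]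
          have : c ≤ u :=
            le_trans (le_mul_of_one_le_left (zero_le : 0 ≤ c) one_le_two) h
          exact tsub_add_cancel_of_le this
    have hbound : ∀ t, dist (φ (φ x c) t) (φ x (s t)) < δ := by
      intro t
      rw [hadd]
      rcases le_total c t with h | h
      · have : min t c = c := min_eq_right h
        simp only [hs, this, add_comm c t]
        simpa using hδ
      · have h1 : c + t ≤ 2 * c := by
          rw [two_mul]; exact add_le_add_right h c
        have h2 : s t ≤ 2 * c := by
          simp only [hs]
          rw [two_mul]
          exact add_le_add h (min_le_right t c)
        calc dist (φ x (c + t)) (φ x (s t))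
            ≤ dist (φ x (c + t)) x + dist x (φ x (s t)) := dist_triangle _ _ _
          _ < δ / 2 + δ / 2 := by
              rw [dist_comm x]
              exact add_lt_add (hsmall _ h1) (hsmall _ h2)
          _ = δ := by ring
    obtain ⟨t₀, ht₀, hxt⟩ := hδ' (φ x c) x s hsH hbound
    refine ⟨c + t₀, ?_, ?_, ?_⟩
    · exact lt_of_lt_of_le hcpos le_self_add
    · push_cast
      have hcη : (c : ℝ) < η / 2 := by
        rw [hcr, hc']
        calc min (r / 3) (η / 4) ≤ η / 4 := min_le_right _ _
          _ < η / 2 := by linarith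
      linarith
    · rw [← hadd, ← hxt]
  -- Step 2: conclude
  intro t x
  have hS : IsClosed {T : ℝ≥0 | φ x T = x} := isClosed_eq (hcx x) continuous_const
  have : t ∈ closure {T : ℝ≥0 | φ x T = x} := by
    rw [Metric.mem_closure_iff]
    intro ε hε
    obtain ⟨p, hp, hpε, hper⟩ := key x ε hε
    have hmul : ∀ k : ℕ, φ x ((k : ℝ≥0) * p) = x := by
      intro k
      induction k with
      | zero => simpa using h0 x
      | succ n ih =>
        have : ((n + 1 : ℕ) : ℝ≥0) * p = (n : ℝ≥0) * p + p := by push_cast; ring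
        rw [this, ← hadd, ih, hper]
    set k : ℕ := ⌈(t : ℝ) / (p : ℝ)⌉₊ with hk
    refine ⟨(k : ℝ≥0) * p, hmul k, ?_⟩
    have hppos : (0 : ℝ) < p := hp
    have h1 : (t : ℝ) ≤ k * p := by
      have := Nat.le_ceil ((t : ℝ) / (p : ℝ))
      rw [div_le_iff₀ hppos] at this
      simpa [hk] using this
    have h2 : (k : ℝ) * p < t + p := by
      have := Nat.ceil_lt_add_one (div_nonneg t.coe_nonneg hppos.le)
      have h3 : (k : ℝ) < (t : ℝ) / p + 1 := by simpa [hk] using this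
      have := (mul_lt_mul_of_pos_right h3 hppos)
      calc (k : ℝ) * p < ((t : ℝ) / p + 1) * p := this
        _ = t + p := by field_simp
    rw [NNReal.dist_eq]
    push_cast
    rw [abs_sub_comm, abs_of_nonneg (by linarith)]
    linarith
  rwa [hS.closure_eq] at this
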